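/- (Tarski's Theorem) Let S be a preordered abelian monoid and y ∈ S with y ≠ 0. Then y is not paradoxical if and only if there exists a state ν : S → [0,∞] with ν(y) = 1. Moreover, if y is not paradoxical, then for any given x ∈ ⟨y⟩ the state may be chosen so that in addition ν(x) = inf{(p − q)/k : p, q ∈ ℕ, k ∈ ℕ with k ≥ 1, and q·y + k·x ≤ p·y}. -/

import Mathlib

open scoped ENNReal

/-- A state on a preordered abelian monoid. -/
def IsState {S : Type*} [AddCommMonoid S] [Preorder S] (ν : S → ℝ≥0∞) : Prop :=
  ν 0 = 0 ∧ (∀ a b : S, ν (a + b) = ν a + ν b) ∧ ∀ a b : S, a ≤ b → ν a ≤ ν b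

section Helpers

variable {M : Type*} [AddCommMonoid M] [Preorder M]

theorem tarskiAdd2 (hadd : ∀ x y z : M, x ≤ y → x + z ≤ y + z)
    {a b c d : M} (h1 : a ≤ b) (h2 : c ≤ d) : a + c ≤ b + d := by
  refine le_trans (hadd _ _ _ h1) ?_
  rw [add_comm b c, add_comm b d]
  exact hadd _ _ _ h2

theorem tarskiSmulMono (hadd : ∀ x y z : M, x ≤ y → x + z ≤ y + z)
    {a b : M} (h : a ≤ b) (n : ℕ) : n • a ≤ n • b := by
  induction n with
  | zero => simp
  | succ k ih =>
    rw [succ_nsmul, succ_nsmul]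
    exact tarskiAdd2 hadd ih h

theorem tarskiLeAddRight (hzero : ∀ x : M, 0 ≤ x)
    (hadd : ∀ x y z : M, x ≤ y → x + z ≤ y + z) (a b : M) : a ≤ a + b := by
  have h := hadd 0 b a (hzero b)
  rw [zero_add, add_comm b a] at h
  exact h

theorem tarskiSmulLeSmul (hzero : ∀ x : M, 0 ≤ x)
    (hadd : ∀ x y z : M, x ≤ y → x + z ≤ y + z) (a : M) {p q : ℕ} (h : p ≤ q) :
    p • a ≤ q • a := by
  have hq : q • a = p • a + (q - p) • a := by
    rw [← add_nsmul]
    congr 1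
    omega
  rw [hq]
  exact tarskiLeAddRight hzero hadd _ _

/-- subadditive functions and `n•`. -/
theorem tarskiSubaddSmul {p : M → ℝ} (hsub : ∀ a b, p (a + b) ≤ p a + p b)
    (h0 : p 0 = 0) (a : M) (n : ℕ) : p (n • a) ≤ n * p a := by
  induction n with
  | zero => simp [h0]
  | succ k ih =>
    rw [succ_nsmul]
    calc p (k • a + a) ≤ p (k • a) + p a := hsub _ _
    _ ≤ k * p a + p a := by linarith
    _ = (k + 1 : ℕ) * p a := by push_cast; ring

theorem tarskiSuperaddSmul {q : M → ℝ} (hsup : ∀ a b, q a + q b ≤ q (a + b))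
    (h0 : q 0 = 0) (a : M) (n : ℕ) : (n : ℝ) * q a ≤ q (n • a) := by
  induction n with
  | zero => simp [h0]
  | succ k ih =>
    rw [succ_nsmul]
    have := hsup (k • a) a
    push_cast
    nlinarith

theorem tarskiCsInfAdd {A B : Set ℝ} {c : ℝ} (hA : A.Nonempty) (hB : B.Nonempty)
    (h : ∀ a ∈ A, ∀ b ∈ B, c ≤ a + b) : c ≤ sInf A + sInf B := by
  have h2 : c - sInf B ≤ sInf A := by
    refine le_csInf hA fun a ha => ?_
    have h1 : c - a ≤ sInf B := le_csInf hB fun b hb => by linarith [h a ha b hb]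
    linarith
  linarith

theorem tarskiCsSupAdd {A B : Set ℝ} {c : ℝ} (hA : A.Nonempty) (hB : B.Nonempty)
    (h : ∀ a ∈ A, ∀ b ∈ B, a + b ≤ c) : sSup A + sSup B ≤ c := by
  have h2 : sSup A ≤ c - sSup B := by
    refine csSup_le hA fun a ha => ?_
    have h1 : sSup B ≤ c - a := csSup_le hB fun b hb => by linarith [h a ha b hb]
    linarith
  linarith

end Helpers

/-- A compatible sub/superadditive pair. -/
structure SandwichPair {T : Type*} [AddCommMonoid T] [Preorder T]
    (q D : T → ℝ) (p₀ q₀ : T → ℝ) : Prop where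
  psub : ∀ a b, p₀ (a + b) ≤ p₀ a + p₀ b
  pmono : ∀ ⦃a b⦄, a ≤ b → p₀ a ≤ p₀ b
  pzero : p₀ 0 = 0
  pleD : ∀ a, p₀ a ≤ D a
  qsup : ∀ a b, q₀ a + q₀ b ≤ q₀ (a + b)
  qmono : ∀ ⦃a b⦄, a ≤ b → q₀ a ≤ q₀ b
  qzero : q₀ 0 = 0
  qgeq : ∀ a, q a ≤ q₀ a
  qlep : ∀ a, q₀ a ≤ p₀ a

theorem sandwich {T : Type*} [AddCommMonoid T] [Preorder T]
    (hzero : ∀ t : T, 0 ≤ t) (hadd : ∀ a b c : T, a ≤ b → a + c ≤ b + c)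
    (q D : T → ℝ)
    (hP : SandwichPair q D D q) :
    ∃ μ : T → ℝ, μ 0 = 0 ∧ (∀ a b, μ (a + b) = μ a + μ b) ∧
      (∀ a b, a ≤ b → μ a ≤ μ b) ∧ (∀ a, q a ≤ μ a) ∧ ∀ a, μ a ≤ D a := by
  classical
  set Good : Set ((T → ℝ)ᵒᵈ × (T → ℝ)) :=
    {z | SandwichPair q D (OrderDual.ofDual z.1) z.2} with hGood
  -- Zorn
  obtain ⟨m, hm⟩ : ∃ m, Maximal (· ∈ Good) m := by
    refine zorn_le₀ Good fun c hcG hc => ?_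
    rcases c.eq_empty_or_nonempty with rfl | hne
    · exact ⟨(OrderDual.toDual D, q), hP, fun z hz => hz.elim⟩
    · -- pointwise inf of p's and sup of q's
      set Pc : T → ℝ := fun t => sInf ((fun z : (T → ℝ)ᵒᵈ × (T → ℝ) => OrderDual.ofDual z.1 t) '' c) with hPc
      set Qc : T → ℝ := fun t => sSup ((fun z : (T → ℝ)ᵒᵈ × (T → ℝ) => z.2 t) '' c) with hQc
      have hvalid : ∀ z ∈ c, SandwichPair q D (OrderDual.ofDual z.1) z.2 := fun z hz => hcG hz
      have hPne : ∀ t : T, ((fun z : (T → ℝ)ᵒᵈ × (T → ℝ) => OrderDual.ofDual z.1 t) '' c).Nonempty :=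
        fun t => hne.image _
      have hQne : ∀ t : T, ((fun z : (T → ℝ)ᵒᵈ × (T → ℝ) => z.2 t) '' c).Nonempty :=
        fun t => hne.image _
      have hPbdd : ∀ t : T, BddBelow ((fun z : (T → ℝ)ᵒᵈ × (T → ℝ) => OrderDual.ofDual z.1 t) '' c) := by
        intro t
        refine ⟨q t, ?_⟩
        rintro r ⟨z, hz, rfl⟩
        exact le_trans ((hvalid z hz).qgeq t) ((hvalid z hz).qlep t)
      have hQbdd : ∀ t : T, BddAbove ((fun z : (T → ℝ)ᵒᵈ × (T → ℝ) => z.2 t) '' c) := by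
        intro t
        refine ⟨D t, ?_⟩
        rintro r ⟨z, hz, rfl⟩
        exact le_trans ((hvalid z hz).qlep t) ((hvalid z hz).pleD t)
      -- comparability helper : p's are anti-ordered, q's ordered
      have hcomp : ∀ z ∈ c, ∀ w ∈ c, (∀ t, OrderDual.ofDual w.1 t ≤ OrderDual.ofDual z.1 t ∧ z.2 t ≤ w.2 t)
          ∨ (∀ t, OrderDual.ofDual z.1 t ≤ OrderDual.ofDual w.1 t ∧ w.2 t ≤ z.2 t) := by
        intro z hz w hw
        rcases eq_or_ne z w with rfl | hne'
        · exact Or.inl fun t => ⟨le_rfl, le_rfl⟩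
        rcases hc hz hw hne' with h | h
        · exact Or.inl fun t => ⟨h.1 t, h.2 t⟩
        · exact Or.inr fun t => ⟨h.1 t, h.2 t⟩
      have hPcle : ∀ (z) (_ : z ∈ c) (t : T), Pc t ≤ OrderDual.ofDual z.1 t :=
        fun z hz t => csInf_le (hPbdd t) ⟨z, hz, rfl⟩
      have hQcge : ∀ (z) (_ : z ∈ c) (t : T), z.2 t ≤ Qc t :=
        fun z hz t => le_csSup (hQbdd t) ⟨z, hz, rfl⟩
      refine ⟨(OrderDual.toDual Pc, Qc), ?_, ?_⟩
      · refine Set.mem_setOf.mpr (show SandwichPair q D Pc Qc from ?_)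
        constructor
        · -- Pc subadd
          intro a b
          by_contra hcon
          push_neg at hcon
          set ε : ℝ := (Pc (a + b) - Pc a - Pc b) / 2 with hε
          have hεpos : 0 < ε := by simp only [hε]; linarith
          obtain ⟨r₁, ⟨z₁, hz₁, rfl⟩, hr₁⟩ :=
            exists_lt_of_csInf_lt (hPne a) (show Pc a < Pc a + ε by linarith)
          obtain ⟨r₂, ⟨z₂, hz₂, rfl⟩, hr₂⟩ :=
            exists_lt_of_csInf_lt (hPne b) (show Pc b < Pc b + ε by linarith)
          have hr₁' : OrderDual.ofDual z₁.1 a < Pc a + ε := hr₁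
          have hr₂' : OrderDual.ofDual z₂.1 b < Pc b + ε := hr₂
          rcases hcomp z₁ hz₁ z₂ hz₂ with h | h
          · have h1 : Pc (a + b) ≤ OrderDual.ofDual z₂.1 (a + b) := hPcle z₂ hz₂ _
            have h2 := (hvalid z₂ hz₂).psub a b
            have h3 := (h a).1
            linarith [hr₁', hr₂']
          · have h1 : Pc (a + b) ≤ OrderDual.ofDual z₁.1 (a + b) := hPcle z₁ hz₁ _
            have h2 := (hvalid z₁ hz₁).psub a b
            have h3 := (h b).1
            linarith [hr₁', hr₂']
        · -- Pc mono
          intro a b hab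
          refine le_csInf (hPne b) ?_
          rintro r ⟨z, hz, rfl⟩
          exact le_trans (hPcle z hz a) ((hvalid z hz).pmono hab)
        · -- Pc 0
          refine le_antisymm ?_ ?_
          · obtain ⟨z, hz⟩ := hne
            have := hPcle z hz 0
            rwa [(hvalid z hz).pzero] at this
          · refine le_csInf (hPne 0) ?_
            rintro r ⟨z, hz, rfl⟩
            exact le_of_eq ((hvalid z hz).pzero).symm
        · -- Pc ≤ D
          intro a
          obtain ⟨z, hz⟩ := hne
          exact le_trans (hPcle z hz a) ((hvalid z hz).pleD a)
        · -- Qc superadd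
          intro a b
          by_contra hcon
          push_neg at hcon
          set ε : ℝ := (Qc a + Qc b - Qc (a + b)) / 2 with hε
          have hεpos : 0 < ε := by simp only [hε]; linarith
          obtain ⟨r₁, ⟨z₁, hz₁, rfl⟩, hr₁⟩ :=
            exists_lt_of_lt_csSup (hQne a) (show Qc a - ε < Qc a by linarith)
          obtain ⟨r₂, ⟨z₂, hz₂, rfl⟩, hr₂⟩ :=
            exists_lt_of_lt_csSup (hQne b) (show Qc b - ε < Qc b by linarith)
          have hr₁' : Qc a - ε < z₁.2 a := hr₁
          have hr₂' : Qc b - ε < z₂.2 b := hr₂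
          rcases hcomp z₁ hz₁ z₂ hz₂ with h | h
          · have h1 : z₂.2 (a + b) ≤ Qc (a + b) := hQcge z₂ hz₂ _
            have h2 := (hvalid z₂ hz₂).qsup a b
            have h3 := (h a).2
            linarith [hr₁', hr₂']
          · have h1 : z₁.2 (a + b) ≤ Qc (a + b) := hQcge z₁ hz₁ _
            have h2 := (hvalid z₁ hz₁).qsup a b
            have h3 := (h b).2
            linarith [hr₁', hr₂']
        · -- Qc mono
          intro a b hab
          refine csSup_le (hQne a) ?_
          rintro r ⟨z, hz, rfl⟩
          exact le_trans ((hvalid z hz).qmono hab) (hQcge z hz b)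
        · -- Qc 0
          refine le_antisymm ?_ ?_
          · refine csSup_le (hQne 0) ?_
            rintro r ⟨z, hz, rfl⟩
            exact le_of_eq ((hvalid z hz).qzero)
          · obtain ⟨z, hz⟩ := hne
            have := hQcge z hz 0
            rwa [(hvalid z hz).qzero] at this
        · -- q ≤ Qc
          intro a
          obtain ⟨z, hz⟩ := hne
          exact le_trans ((hvalid z hz).qgeq a) (hQcge z hz a)
        · -- Qc ≤ Pc
          intro a
          refine csSup_le (hQne a) ?_
          rintro r ⟨z, hz, rfl⟩
          refine le_csInf (hPne a) ?_
          rintro r' ⟨w, hw, rfl⟩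
          rcases hcomp z hz w hw with h | h
          · exact le_trans (h a).2 ((hvalid w hw).qlep a)
          · exact le_trans (le_trans ((hvalid z hz).qlep a) (h a).1) le_rfl
      · -- upper bound
        intro z hz
        refine ⟨?_, ?_⟩
        · show z.1 ≤ OrderDual.toDual Pc
          intro t
          exact hPcle z hz t
        · intro t
          exact hQcge z hz t
  have hmG : SandwichPair q D (OrderDual.ofDual m.1) m.2 := hm.prop
  set P : T → ℝ := OrderDual.ofDual m.1 with hPdef
  set Q : T → ℝ := m.2 with hQdef
  have hkey : ∀ a : T, P a = Q a := by
    intro a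
    set Bset : Set ℝ := {r | ∃ n : ℕ, ∃ s : T, 1 ≤ n ∧ r = (P (s + n • a) - Q s) / n} with hBsetdef
    set B : ℝ := sInf Bset with hBdef
    set Aset : Set ℝ := {r | ∃ n : ℕ, ∃ s : T, 1 ≤ n ∧ r = (Q (s + n • a) - P s) / n} with hAsetdef
    set A : ℝ := sSup Aset with hAdef
    have hBne : Bset.Nonempty := ⟨(P (0 + 1 • a) - Q 0) / 1, 1, 0, le_rfl, by norm_num⟩
    have hBlb : ∀ r ∈ Bset, (0:ℝ) ≤ r := by
      rintro r ⟨n, s, hn, rfl⟩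
      have h1 : Q s ≤ P s := hmG.qlep s
      have h2 : P s ≤ P (s + n • a) := hmG.pmono (tarskiLeAddRight hzero hadd s _)
      have hnpos : (0:ℝ) < n := by exact_mod_cast hn
      exact div_nonneg (by linarith) (le_of_lt hnpos)
    have hBbdd : BddBelow Bset := ⟨0, hBlb⟩
    have hAne : Aset.Nonempty := ⟨(Q (0 + 1 • a) - P 0) / 1, 1, 0, le_rfl, by norm_num⟩
    have hAbdd : BddAbove Aset := by
      refine ⟨P a, ?_⟩
      rintro r ⟨n, s, hn, rfl⟩
      have hnpos : (0:ℝ) < n := by exact_mod_cast hn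
      have h1 : Q (s + n • a) ≤ P (s + n • a) := hmG.qlep _
      have h2 : P (s + n • a) ≤ P s + P (n • a) := hmG.psub s _
      have h3 : P (n • a) ≤ n * P a := tarskiSubaddSmul hmG.psub hmG.pzero a n
      rw [div_le_iff₀ hnpos]
      nlinarith
    have hAB : A ≤ B := by
      refine csSup_le hAne ?_
      rintro r ⟨n, t, hn, rfl⟩
      refine le_csInf hBne ?_
      rintro r' ⟨mm, s, hmm, rfl⟩
      have hnpos : (0:ℝ) < n := by exact_mod_cast hn
      have hmpos : (0:ℝ) < mm := by exact_mod_cast hmm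
      have k1 : (mm:ℝ) * Q (t + n • a) ≤ Q (mm • (t + n • a)) :=
        tarskiSuperaddSmul hmG.qsup hmG.qzero _ mm
      have k2 : (n:ℝ) * Q s ≤ Q (n • s) := tarskiSuperaddSmul hmG.qsup hmG.qzero _ n
      have k3 : Q (mm • (t + n • a)) + Q (n • s) ≤ Q (mm • (t + n • a) + n • s) := hmG.qsup _ _
      have keq : mm • (t + n • a) + n • s = n • (s + mm • a) + mm • t := by
        rw [smul_add, smul_add, ← mul_smul, ← mul_smul, Nat.mul_comm mm n]
        abel
      have k4 : Q (mm • (t + n • a) + n • s) ≤ P (n • (s + mm • a) + mm • t) := by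
        rw [keq]
        exact hmG.qlep _
      have k5 : P (n • (s + mm • a) + mm • t) ≤ (n:ℝ) * P (s + mm • a) + mm * P t := by
        have k5a : P (n • (s + mm • a) + mm • t) ≤ P (n • (s + mm • a)) + P (mm • t) := hmG.psub _ _
        have k5b : P (n • (s + mm • a)) ≤ (n:ℝ) * P (s + mm • a) :=
          tarskiSubaddSmul hmG.psub hmG.pzero _ n
        have k5c : P (mm • t) ≤ (mm:ℝ) * P t := tarskiSubaddSmul hmG.psub hmG.pzero _ mm
        linarith
      rw [div_le_div_iff₀ hnpos hmpos]
      nlinarith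
    -- raise Q at a to B
    have hQ'ub : ∀ s : T, ∀ r ∈ {r | ∃ n : ℕ, ∃ t : T, t + n • a ≤ s ∧ r = Q t + n * B}, r ≤ P s := by
      rintro s r ⟨n, t, hts, rfl⟩
      rcases Nat.eq_zero_or_pos n with rfl | hn
      · have ht : t ≤ s := by simpa using hts
        have : Q t ≤ P s := le_trans (hmG.qlep t) (hmG.pmono ht)
        push_cast
        linarith
      · have hBle : B ≤ (P (t + n • a) - Q t) / n := csInf_le hBbdd ⟨n, t, hn, rfl⟩
        have hnpos : (0:ℝ) < n := by exact_mod_cast hn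
        have h2 : B * n ≤ P (t + n • a) - Q t := by rwa [le_div_iff₀ hnpos] at hBle
        have h3 : P (t + n • a) ≤ P s := hmG.pmono hts
        nlinarith
    have hQ'bdd : ∀ s : T, BddAbove {r | ∃ n : ℕ, ∃ t : T, t + n • a ≤ s ∧ r = Q t + n * B} :=
      fun s => ⟨P s, hQ'ub s⟩
    have hQ'ne : ∀ s : T, {r | ∃ n : ℕ, ∃ t : T, t + n • a ≤ s ∧ r = Q t + n * B}.Nonempty :=
      fun s => ⟨Q s + (0:ℕ) * B, 0, s, by simpa using le_rfl, rfl⟩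
    set Q' : T → ℝ := fun s => sSup {r | ∃ n : ℕ, ∃ t : T, t + n • a ≤ s ∧ r = Q t + n * B} with hQ'def
    have hQ'leP : ∀ s, Q' s ≤ P s := fun s => csSup_le (hQ'ne s) (hQ'ub s)
    have hQQ' : ∀ s, Q s ≤ Q' s := by
      intro s
      have : Q s = Q s + (0:ℕ) * B := by push_cast; ring
      rw [this]
      exact le_csSup (hQ'bdd s) ⟨0, s, by simpa using le_rfl, rfl⟩
    have hz' : (m.1, Q') ∈ Good := by
      refine Set.mem_setOf.mpr ?_
      refine ⟨hmG.psub, hmG.pmono, hmG.pzero, hmG.pleD, ?_, ?_, ?_, ?_, hQ'leP⟩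
      · -- superadd
        intro s₁ s₂
        refine tarskiCsSupAdd (hQ'ne s₁) (hQ'ne s₂) ?_
        rintro r₁ ⟨n₁, t₁, h₁, rfl⟩ r₂ ⟨n₂, t₂, h₂, rfl⟩
        have hmem : Q (t₁ + t₂) + ((n₁ + n₂ : ℕ) : ℝ) * B ∈
            {r | ∃ n : ℕ, ∃ t : T, t + n • a ≤ s₁ + s₂ ∧ r = Q t + n * B} := by
          refine ⟨n₁ + n₂, t₁ + t₂, ?_, rfl⟩
          have : t₁ + t₂ + (n₁ + n₂) • a = (t₁ + n₁ • a) + (t₂ + n₂ • a) := by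
            rw [add_smul]
            abel
          rw [this]
          exact tarskiAdd2 hadd h₁ h₂
        have hqq : Q t₁ + Q t₂ ≤ Q (t₁ + t₂) := hmG.qsup _ _
        have hle' := le_csSup (hQ'bdd (s₁ + s₂)) hmem
        push_cast at hle' ⊢
        linarith
      · -- mono
        intro s s' hss'
        refine csSup_le (hQ'ne s) ?_
        rintro r ⟨n, t, h, rfl⟩
        exact le_csSup (hQ'bdd s') ⟨n, t, le_trans h hss', rfl⟩
      · -- zero
        refine le_antisymm (le_trans (hQ'leP 0) (le_of_eq hmG.pzero)) ?_
        exact le_trans (le_of_eq hmG.qzero.symm) (hQQ' 0)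
      · exact fun s => le_trans (hmG.qgeq s) (hQQ' s)
    have hle1 : m ≤ (m.1, Q') := ⟨le_rfl, fun t => hQQ' t⟩
    have hmax1 := hm.2 hz' hle1
    have hQ'B : B ≤ Q' a := by
      have : B = Q 0 + ((1:ℕ):ℝ) * B := by rw [hmG.qzero]; push_cast; ring
      rw [this]
      refine le_csSup (hQ'bdd a) ⟨1, 0, ?_, rfl⟩
      simpa using le_rfl
    have hQa : B ≤ Q a := le_trans hQ'B (hmax1.2 a)
    -- lower P at a to A
    have hP'lb : ∀ s : T, ∀ r ∈ {r | ∃ n : ℕ, ∃ t : T, s ≤ t + n • a ∧ r = P t + n * A}, Q s ≤ r := by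
      rintro s r ⟨n, t, hst, rfl⟩
      rcases Nat.eq_zero_or_pos n with rfl | hn
      · have ht : s ≤ t := by simpa using hst
        have : Q s ≤ P t := le_trans (hmG.qmono ht) (hmG.qlep t)
        push_cast
        linarith
      · have hAge : (Q (t + n • a) - P t) / n ≤ A := le_csSup hAbdd ⟨n, t, hn, rfl⟩
        have hnpos : (0:ℝ) < n := by exact_mod_cast hn
        have h2 : Q (t + n • a) - P t ≤ A * n := by rwa [div_le_iff₀ hnpos] at hAge
        have h3 : Q s ≤ Q (t + n • a) := hmG.qmono hst
        nlinarith
    have hP'bdd : ∀ s : T, BddBelow {r | ∃ n : ℕ, ∃ t : T, s ≤ t + n • a ∧ r = P t + n * A} :=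
      fun s => ⟨Q s, hP'lb s⟩
    have hP'ne : ∀ s : T, {r | ∃ n : ℕ, ∃ t : T, s ≤ t + n • a ∧ r = P t + n * A}.Nonempty :=
      fun s => ⟨P s + (0:ℕ) * A, 0, s, by simpa using le_rfl, rfl⟩
    set P' : T → ℝ := fun s => sInf {r | ∃ n : ℕ, ∃ t : T, s ≤ t + n • a ∧ r = P t + n * A} with hP'def
    have hP'geQ : ∀ s, Q s ≤ P' s := fun s => le_csInf (hP'ne s) (hP'lb s)
    have hP'leP : ∀ s, P' s ≤ P s := by
      intro s
      have : P s = P s + (0:ℕ) * A := by push_cast; ring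
      conv_rhs => rw [this]
      exact csInf_le (hP'bdd s) ⟨0, s, by simpa using le_rfl, rfl⟩
    have hz'' : (OrderDual.toDual P', m.2) ∈ Good := by
      refine Set.mem_setOf.mpr (show SandwichPair q D P' Q from ?_)
      refine ⟨?_, ?_, ?_, ?_, hmG.qsup, hmG.qmono, hmG.qzero, hmG.qgeq, hP'geQ⟩
      · -- subadd
        intro s₁ s₂
        refine tarskiCsInfAdd (hP'ne s₁) (hP'ne s₂) ?_
        rintro r₁ ⟨n₁, t₁, h₁, rfl⟩ r₂ ⟨n₂, t₂, h₂, rfl⟩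
        have hmem : P (t₁ + t₂) + ((n₁ + n₂ : ℕ) : ℝ) * A ∈
            {r | ∃ n : ℕ, ∃ t : T, s₁ + s₂ ≤ t + n • a ∧ r = P t + n * A} := by
          refine ⟨n₁ + n₂, t₁ + t₂, ?_, rfl⟩
          have heq2 : t₁ + t₂ + (n₁ + n₂) • a = (t₁ + n₁ • a) + (t₂ + n₂ • a) := by
            rw [add_smul]
            abel
          rw [heq2]
          exact tarskiAdd2 hadd h₁ h₂
        have hpp : P (t₁ + t₂) ≤ P t₁ + P t₂ := hmG.psub _ _
        have hle' := csInf_le (hP'bdd (s₁ + s₂)) hmem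
        push_cast at hle' ⊢
        linarith
      · -- mono
        intro s s' hss'
        refine le_csInf (hP'ne s') ?_
        rintro r ⟨n, t, h, rfl⟩
        exact csInf_le (hP'bdd s) ⟨n, t, le_trans hss' h, rfl⟩
      · -- zero
        refine le_antisymm (le_trans (hP'leP 0) (le_of_eq hmG.pzero)) ?_
        exact le_trans (le_of_eq hmG.qzero.symm) (hP'geQ 0)
      · exact fun s => le_trans (hP'leP s) (hmG.pleD s)
    have hle2 : m ≤ (OrderDual.toDual P', m.2) := by
      refine ⟨?_, le_rfl⟩
      show P' ≤ P
      intro t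
      exact hP'leP t
    have hmax2 := hm.2 hz'' hle2
    have hPP' : P ≤ P' := hmax2.1
    have hP'A : P' a ≤ A := by
      have : A = P 0 + ((1:ℕ):ℝ) * A := by rw [hmG.pzero]; push_cast; ring
      rw [this]
      refine csInf_le (hP'bdd a) ⟨1, 0, ?_, rfl⟩
      simpa using le_rfl
    exact le_antisymm (le_trans (hPP' a) (le_trans hP'A (le_trans hAB hQa))) (hmG.qlep a)
  refine ⟨P, hmG.pzero, ?_, fun a b h => hmG.pmono h, fun a => le_trans (hmG.qgeq a) (le_of_eq (hkey a).symm), hmG.pleD⟩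
  intro a b
  refine le_antisymm (hmG.psub a b) ?_
  rw [hkey a, hkey b, hkey (a + b)]
  exact hmG.qsup a b

open scoped ENNReal

theorem tarski_aux {S : Type*} [AddCommMonoid S] [Preorder S]
    (hzero : ∀ x : S, 0 ≤ x)
    (hadd : ∀ x y z : S, x ≤ y → x + z ≤ y + z)
    (y : S) (hnp : ¬ ∃ n : ℕ, 1 ≤ n ∧ (n + 1) • y ≤ n • y)
    (x : S) (hx : ∃ n : ℕ, x ≤ n • y) :
    ∃ ν : S → ℝ≥0∞, IsState ν ∧ ν y = 1 ∧
      ν x = sInf {r : ℝ≥0∞ | ∃ p q k : ℕ, 1 ≤ k ∧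
        q • y + k • x ≤ p • y ∧
        r = ((p : ℝ≥0∞) - (q : ℝ≥0∞)) / (k : ℝ≥0∞)} := by
  classical
  have hy0 : y ≤ 0 → False := by
    intro h
    refine hnp ⟨1, le_rfl, ?_⟩
    have h2 := hadd y 0 y h
    rw [zero_add] at h2
    calc (1 + 1) • y = y + y := by rw [add_smul, one_smul]
    _ ≤ y := h2
    _ = 1 • y := (one_smul ℕ y).symm
  have hpar : ∀ {N p : ℕ}, 1 ≤ N → p < N → N • y ≤ p • y → False := by
    intro N p hN hlt hle
    have h2 : p • y ≤ (N - 1) • y := tarskiSmulLeSmul hzero hadd y (by omega)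
    have h3 : N • y ≤ (N - 1) • y := le_trans hle h2
    rcases Nat.lt_or_ge N 2 with hN2 | hN2
    · have hN1 : N = 1 := by omega
      subst hN1
      have : y ≤ 0 := by simpa using h3
      exact hy0 this
    · refine hnp ⟨N - 1, by omega, ?_⟩
      have hN1 : N - 1 + 1 = N := by omega
      rw [hN1]
      exact h3
  set Γ : Set ℝ≥0∞ := {r : ℝ≥0∞ | ∃ p q k : ℕ, 1 ≤ k ∧ q • y + k • x ≤ p • y ∧
      r = ((p : ℝ≥0∞) - (q : ℝ≥0∞)) / (k : ℝ≥0∞)} with hΓdef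
  obtain ⟨n₀, hn₀⟩ := hx
  have hmemΓ : ((n₀ : ℝ≥0∞) - ((0:ℕ) : ℝ≥0∞)) / ((1:ℕ) : ℝ≥0∞) ∈ Γ := by
    refine ⟨n₀, 0, 1, le_rfl, ?_, rfl⟩
    simpa using hn₀
  have hΓtop : sInf Γ ≠ ⊤ := by
    intro h
    have h1 := sInf_le hmemΓ
    rw [h, top_le_iff] at h1
    simp at h1
  set gx : ℝ := (sInf Γ).toReal with hgxdef
  have hgx0 : 0 ≤ gx := ENNReal.toReal_nonneg
  have hqlep' : ∀ {p q k : ℕ}, 1 ≤ k → q • y + k • x ≤ p • y → q ≤ p := by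
    intro p qn k hk hle
    by_contra hqp
    push_neg at hqp
    have h1 : qn • y ≤ qn • y + k • x := tarskiLeAddRight hzero hadd _ _
    exact hpar (by omega) hqp (le_trans h1 hle)
  have hgxle : ∀ {p q k : ℕ}, 1 ≤ k → q • y + k • x ≤ p • y → gx ≤ ((p:ℝ) - (q:ℝ)) / (k:ℝ) := by
    intro p qn k hk hle
    have hqp : qn ≤ p := hqlep' hk hle
    have hmem : ((p : ℝ≥0∞) - (qn : ℝ≥0∞)) / (k : ℝ≥0∞) ∈ Γ := ⟨p, qn, k, hk, hle, rfl⟩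
    have h1 : sInf Γ ≤ ((p : ℝ≥0∞) - (qn : ℝ≥0∞)) / (k : ℝ≥0∞) := sInf_le hmem
    have h2 : ((p : ℝ≥0∞) - (qn : ℝ≥0∞)) / (k : ℝ≥0∞) ≠ ⊤ := by
      refine (ENNReal.div_lt_top (ENNReal.sub_ne_top (ENNReal.natCast_ne_top p)) ?_).ne
      have : k ≠ 0 := by omega
      exact_mod_cast this
    have h3 := ENNReal.toReal_mono h2 h1
    rw [hgxdef]
    refine le_trans h3 (le_of_eq ?_)
    rw [ENNReal.toReal_div,
      ENNReal.toReal_sub_of_le (by exact_mod_cast hqp) (ENNReal.natCast_ne_top p)]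
    simp
  -- the order ideal generated by y, as a submonoid
  set N : AddSubmonoid S :=
    { carrier := {s : S | ∃ n : ℕ, s ≤ n • y}
      zero_mem' := ⟨0, by simpa using le_rfl⟩
      add_mem' := by
        rintro a b ⟨n, hn⟩ ⟨mm, hmm⟩
        exact ⟨n + mm, by rw [add_smul]; exact tarskiAdd2 hadd hn hmm⟩ } with hNdef
  have hdown : ∀ {a b : S}, a ≤ b → b ∈ N → a ∈ N := by
    rintro a b hab ⟨n, hn⟩
    exact ⟨n, le_trans hab hn⟩
  have hzeroN : ∀ t : ↥N, (0:↥N) ≤ t := by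
    intro t
    rw [← Subtype.coe_le_coe]
    simpa using hzero (t : S)
  have haddN : ∀ a b c : ↥N, a ≤ b → a + c ≤ b + c := by
    intro a b c h
    rw [← Subtype.coe_le_coe] at h ⊢
    push_cast
    exact hadd _ _ _ h
  set DD : ↥N → ℝ :=
    fun s => sInf {r : ℝ | ∃ p k : ℕ, 1 ≤ k ∧ k • (s:S) ≤ p • y ∧ r = (p:ℝ) / (k:ℝ)} with hDDdef
  set qq : ↥N → ℝ :=
    fun s => sSup {r : ℝ | ∃ n mm : ℕ, n • y + mm • x ≤ (s:S) ∧ r = (n:ℝ) + (mm:ℝ) * gx}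
    with hqqdef
  have hDne : ∀ s : ↥N,
      {r : ℝ | ∃ p k : ℕ, 1 ≤ k ∧ k • (s:S) ≤ p • y ∧ r = (p:ℝ) / (k:ℝ)}.Nonempty := by
    intro s
    obtain ⟨n, hn⟩ := s.2
    exact ⟨(n:ℝ) / ((1:ℕ):ℝ), n, 1, le_rfl, by simpa using hn, rfl⟩
  have hDlb : ∀ s : ↥N, ∀ r ∈ {r : ℝ | ∃ p k : ℕ, 1 ≤ k ∧ k • (s:S) ≤ p • y ∧ r = (p:ℝ) / (k:ℝ)},
      (0:ℝ) ≤ r := by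
    rintro s r ⟨p, k, hk, h, rfl⟩
    positivity
  have hDbdd : ∀ s : ↥N,
      BddBelow {r : ℝ | ∃ p k : ℕ, 1 ≤ k ∧ k • (s:S) ≤ p • y ∧ r = (p:ℝ) / (k:ℝ)} :=
    fun s => ⟨0, hDlb s⟩
  have hqne : ∀ s : ↥N,
      {r : ℝ | ∃ n mm : ℕ, n • y + mm • x ≤ (s:S) ∧ r = (n:ℝ) + (mm:ℝ) * gx}.Nonempty := by
    intro s
    refine ⟨((0:ℕ):ℝ) + ((0:ℕ):ℝ) * gx, 0, 0, ?_, rfl⟩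
    simpa using hzero (s : S)
  have hcross : ∀ s : ↥N,
      ∀ r ∈ {r : ℝ | ∃ n mm : ℕ, n • y + mm • x ≤ (s:S) ∧ r = (n:ℝ) + (mm:ℝ) * gx},
      ∀ r' ∈ {r : ℝ | ∃ p k : ℕ, 1 ≤ k ∧ k • (s:S) ≤ p • y ∧ r = (p:ℝ) / (k:ℝ)}, r ≤ r' := by
    rintro s r ⟨n, mm, hnm, rfl⟩ r' ⟨p, k, hk, hks, rfl⟩
    have hkpos : (0:ℝ) < (k:ℝ) := by exact_mod_cast hk
    have h1 : (k * n) • y + (k * mm) • x ≤ p • y := by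
      have h1a : k • (n • y + mm • x) ≤ k • (s:S) := tarskiSmulMono hadd hnm k
      have h1b : k • (n • y + mm • x) = (k*n) • y + (k*mm) • x := by
        rw [smul_add, ← mul_smul, ← mul_smul]
      rw [← h1b]
      exact le_trans h1a hks
    have hknp : k * n ≤ p := by
      rcases Nat.eq_zero_or_pos n with rfl | hn1
      · simpa using Nat.zero_le p
      · by_contra hc
        push_neg at hc
        have h2 : (k*n) • y ≤ (k*n) • y + (k*mm) • x := tarskiLeAddRight hzero hadd _ _
        exact hpar (by exact Nat.one_le_iff_ne_zero.mpr (by positivity)) hc (le_trans h2 h1)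
    rcases Nat.eq_zero_or_pos mm with rfl | hm1
    · have h4 : n * k ≤ p := by rw [Nat.mul_comm]; exact hknp
      have h5 : (n:ℝ) * (k:ℝ) ≤ (p:ℝ) := by exact_mod_cast h4
      rw [le_div_iff₀ hkpos]
      push_cast
      nlinarith
    · have hkm : 1 ≤ k * mm := Nat.mul_pos hk hm1
      have hgx2 : gx ≤ ((p:ℝ) - ((k*n:ℕ):ℝ)) / ((k*mm:ℕ):ℝ) := hgxle hkm h1
      have hmpos : (0:ℝ) < (mm:ℝ) := by exact_mod_cast hm1
      push_cast at hgx2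
      rw [le_div_iff₀ (by positivity)] at hgx2
      rw [le_div_iff₀ hkpos]
      nlinarith
  have hqbdd : ∀ s : ↥N,
      BddAbove {r : ℝ | ∃ n mm : ℕ, n • y + mm • x ≤ (s:S) ∧ r = (n:ℝ) + (mm:ℝ) * gx} := by
    intro s
    obtain ⟨r', hr'⟩ := hDne s
    exact ⟨r', fun r hr => hcross s r hr r' hr'⟩
  have hqq0 : ∀ s : ↥N, 0 ≤ qq s := by
    intro s
    have : ((0:ℕ):ℝ) + ((0:ℕ):ℝ) * gx ∈
        {r : ℝ | ∃ n mm : ℕ, n • y + mm • x ≤ (s:S) ∧ r = (n:ℝ) + (mm:ℝ) * gx} :=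
      ⟨0, 0, by simpa using hzero (s : S), rfl⟩
    have h1 : ((0:ℕ):ℝ) + ((0:ℕ):ℝ) * gx ≤ qq s := le_csSup (hqbdd s) this
    simpa using h1
  have hpair : SandwichPair qq DD DD qq := by
    constructor
    · -- DD subadd
      intro s t
      refine tarskiCsInfAdd (hDne s) (hDne t) ?_
      rintro r₁ ⟨p₁, k₁, hk₁, h₁, rfl⟩ r₂ ⟨p₂, k₂, hk₂, h₂, rfl⟩
      have hk₁p : (0:ℝ) < (k₁:ℝ) := by exact_mod_cast hk₁
      have hk₂p : (0:ℝ) < (k₂:ℝ) := by exact_mod_cast hk₂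
      have hineq : (k₁*k₂) • ((s + t : ↥N):S) ≤ (k₂*p₁ + k₁*p₂) • y := by
        have hco : ((s + t : ↥N):S) = (s:S) + (t:S) := rfl
        rw [hco, smul_add]
        have e1 : (k₁*k₂) • (s:S) = k₂ • (k₁ • (s:S)) := by
          rw [Nat.mul_comm, mul_smul]
        have e2 : (k₁*k₂) • (t:S) = k₁ • (k₂ • (t:S)) := by rw [mul_smul]
        rw [e1, e2, add_smul, mul_smul, mul_smul]
        exact tarskiAdd2 hadd (tarskiSmulMono hadd h₁ k₂) (tarskiSmulMono hadd h₂ k₁)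
      have hmem : (((k₂*p₁ + k₁*p₂ : ℕ)):ℝ) / (((k₁*k₂ : ℕ)):ℝ) ∈
          {r : ℝ | ∃ p k : ℕ, 1 ≤ k ∧ k • ((s + t : ↥N):S) ≤ p • y ∧ r = (p:ℝ) / (k:ℝ)} :=
        ⟨k₂*p₁ + k₁*p₂, k₁*k₂, Nat.mul_pos hk₁ hk₂, hineq, rfl⟩
      have h3 := csInf_le (hDbdd (s + t)) hmem
      have h4 : (((k₂*p₁ + k₁*p₂ : ℕ)):ℝ) / (((k₁*k₂ : ℕ)):ℝ) = (p₁:ℝ)/(k₁:ℝ) + (p₂:ℝ)/(k₂:ℝ) := by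
        push_cast
        field_simp
      rw [h4] at h3
      exact h3
    · -- DD mono
      intro s t hst
      refine csInf_le_csInf (hDbdd s) (hDne t) ?_
      rintro r ⟨p, k, hk, h, rfl⟩
      exact ⟨p, k, hk, le_trans (tarskiSmulMono hadd (Subtype.coe_le_coe.mpr hst) k) h, rfl⟩
    · -- DD zero
      refine le_antisymm ?_ (le_csInf (hDne 0) (hDlb 0))
      have hmem : ((0:ℕ):ℝ) / ((1:ℕ):ℝ) ∈
          {r : ℝ | ∃ p k : ℕ, 1 ≤ k ∧ k • (((0:↥N)):S) ≤ p • y ∧ r = (p:ℝ) / (k:ℝ)} := by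
        refine ⟨0, 1, le_rfl, ?_, rfl⟩
        simp
      have h5 : DD 0 ≤ ((0:ℕ):ℝ) / ((1:ℕ):ℝ) := csInf_le (hDbdd 0) hmem
      simpa using h5
    · exact fun s => le_rfl
    · -- qq superadd
      intro s t
      refine tarskiCsSupAdd (hqne s) (hqne t) ?_
      rintro r₁ ⟨n₁, m₁, h₁, rfl⟩ r₂ ⟨n₂, m₂, h₂, rfl⟩
      have hineq : (n₁ + n₂) • y + (m₁ + m₂) • x ≤ ((s + t : ↥N):S) := by
        have hco : ((s + t : ↥N):S) = (s:S) + (t:S) := rfl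
        rw [hco, add_smul, add_smul, add_add_add_comm]
        exact tarskiAdd2 hadd h₁ h₂
      have hmem : (((n₁+n₂:ℕ)):ℝ) + (((m₁+m₂:ℕ)):ℝ) * gx ∈
          {r : ℝ | ∃ n mm : ℕ, n • y + mm • x ≤ ((s + t : ↥N):S) ∧ r = (n:ℝ) + (mm:ℝ) * gx} :=
        ⟨n₁+n₂, m₁+m₂, hineq, rfl⟩
      have h3 : (((n₁+n₂:ℕ)):ℝ) + (((m₁+m₂:ℕ)):ℝ) * gx ≤ qq (s + t) :=
        le_csSup (hqbdd (s + t)) hmem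
      push_cast at h3 ⊢
      linarith
    · -- qq mono
      intro s t hst
      refine csSup_le (hqne s) ?_
      rintro r ⟨n, mm, h, rfl⟩
      exact le_csSup (hqbdd t) ⟨n, mm, le_trans h (Subtype.coe_le_coe.mpr hst), rfl⟩
    · -- qq zero
      refine le_antisymm ?_ ?_
      · refine csSup_le (hqne 0) ?_
        rintro r ⟨n, mm, h, rfl⟩
        have h' : n • y + mm • x ≤ (0:S) := h
        clear h
        rename' h' => h
        have hn0 : n = 0 := by
          by_contra hn
          have hn1 : 1 ≤ n := Nat.one_le_iff_ne_zero.mpr hn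
          have hy1 : y ≤ n • y := by
            have h6 : (1:ℕ) • y ≤ n • y := tarskiSmulLeSmul hzero hadd y (by omega)
            rwa [one_smul] at h6
          have hy2 : n • y ≤ n • y + mm • x := tarskiLeAddRight hzero hadd _ _
          exact hy0 (le_trans hy1 (le_trans hy2 h))
        subst hn0
        rw [zero_smul, zero_add] at h
        rcases Nat.eq_zero_or_pos mm with rfl | hm1
        · simp
        · have hx0 : x ≤ 0 := by
            have hx1 : x ≤ mm • x := by
              have h6 : (1:ℕ) • x ≤ mm • x := tarskiSmulLeSmul hzero hadd x (by omega)
              rwa [one_smul] at h6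
            exact le_trans hx1 h
          have hgle : gx ≤ ((0:ℝ) - (0:ℝ)) / ((1:ℝ)) := by
            have : (0:ℕ) • y + (1:ℕ) • x ≤ (0:ℕ) • y := by
              simpa using hx0
            exact_mod_cast hgxle le_rfl this
          have : gx = 0 := le_antisymm (by simpa using hgle) hgx0
          rw [this]
          simp
      · have hmem : ((0:ℕ):ℝ) + ((0:ℕ):ℝ) * gx ∈
            {r : ℝ | ∃ n mm : ℕ, n • y + mm • x ≤ (((0:↥N)):S) ∧ r = (n:ℝ) + (mm:ℝ) * gx} := by
          refine ⟨0, 0, ?_, rfl⟩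
          simp
        have h5 : ((0:ℕ):ℝ) + ((0:ℕ):ℝ) * gx ≤ qq 0 := le_csSup (hqbdd 0) hmem
        simpa using h5
    · exact fun s => le_rfl
    · -- qq ≤ DD
      intro s
      refine csSup_le (hqne s) fun r hr => le_csInf (hDne s) fun r' hr' => hcross s r hr r' hr'
  obtain ⟨μ, hμ0, hμadd, hμmono, hqleμ, hμleD⟩ := sandwich hzeroN haddN qq DD hpair
  -- distinguished elements of N
  set yN : ↥N := ⟨y, 1, le_of_eq (one_smul ℕ y).symm⟩ with hyNdef
  set xN : ↥N := ⟨x, n₀, hn₀⟩ with hxNdef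
  have hDy1 : DD yN ≤ 1 := by
    have hmem : ((1:ℕ):ℝ) / ((1:ℕ):ℝ) ∈
        {r : ℝ | ∃ p k : ℕ, 1 ≤ k ∧ k • ((yN:↥N):S) ≤ p • y ∧ r = (p:ℝ) / (k:ℝ)} :=
      ⟨1, 1, le_rfl, le_rfl, rfl⟩
    have h5 : DD yN ≤ ((1:ℕ):ℝ) / ((1:ℕ):ℝ) := csInf_le (hDbdd yN) hmem
    simpa using h5
  have hqy1 : (1:ℝ) ≤ qq yN := by
    have hmem : ((1:ℕ):ℝ) + ((0:ℕ):ℝ) * gx ∈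
        {r : ℝ | ∃ n mm : ℕ, n • y + mm • x ≤ ((yN:↥N):S) ∧ r = (n:ℝ) + (mm:ℝ) * gx} := by
      refine ⟨1, 0, ?_, rfl⟩
      simp [hyNdef]
    have h5 : ((1:ℕ):ℝ) + ((0:ℕ):ℝ) * gx ≤ qq yN := le_csSup (hqbdd yN) hmem
    simpa using h5
  have hμy1 : μ yN = 1 := le_antisymm (le_trans (hμleD yN) hDy1) (le_trans hqy1 (hqleμ yN))
  have hqxgx : gx ≤ qq xN := by
    have hmem : ((0:ℕ):ℝ) + ((1:ℕ):ℝ) * gx ∈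
        {r : ℝ | ∃ n mm : ℕ, n • y + mm • x ≤ ((xN:↥N):S) ∧ r = (n:ℝ) + (mm:ℝ) * gx} := by
      refine ⟨0, 1, ?_, rfl⟩
      simp [hxNdef]
    have h5 : ((0:ℕ):ℝ) + ((1:ℕ):ℝ) * gx ≤ qq xN := le_csSup (hqbdd xN) hmem
    simpa using h5
  have hμsmul : ∀ (k : ℕ) (t : ↥N), μ (k • t) = (k:ℝ) * μ t := by
    intro k t
    induction k with
    | zero => simp [zero_smul, hμ0]
    | succ j ih =>
      rw [succ_nsmul, hμadd, ih]
      push_cast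
      ring
  have hμpos : ∀ t : ↥N, 0 ≤ μ t := fun t => le_trans (hqq0 t) (hqleμ t)
  -- the state
  set ν : S → ℝ≥0∞ := fun s => if h : s ∈ N then ENNReal.ofReal (μ ⟨s, h⟩) else ⊤ with hνdef
  have hν0 : ν 0 = 0 := by
    have h0 : (0:S) ∈ N := N.zero_mem
    have : ν 0 = ENNReal.ofReal (μ ⟨0, h0⟩) := dif_pos h0
    rw [this]
    have he : (⟨(0:S), h0⟩ : ↥N) = 0 := rfl
    rw [he, hμ0]
    simp
  have hνadd : ∀ a b : S, ν (a + b) = ν a + ν b := by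
    intro a b
    by_cases ha : a ∈ N
    · by_cases hb : b ∈ N
      · have hab : a + b ∈ N := N.add_mem ha hb
        have e1 : ν (a + b) = ENNReal.ofReal (μ ⟨a + b, hab⟩) := dif_pos hab
        have e2 : ν a = ENNReal.ofReal (μ ⟨a, ha⟩) := dif_pos ha
        have e3 : ν b = ENNReal.ofReal (μ ⟨b, hb⟩) := dif_pos hb
        rw [e1, e2, e3]
        have he : (⟨a + b, hab⟩ : ↥N) = ⟨a, ha⟩ + ⟨b, hb⟩ := rfl
        rw [he, hμadd, ENNReal.ofReal_add (hμpos _) (hμpos _)]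
      · have hab : a + b ∉ N := by
          intro hmem
          exact hb (hdown (by
            have := tarskiLeAddRight hzero hadd b a
            rwa [add_comm b a] at this) hmem)
        have e1 : ν (a + b) = ⊤ := dif_neg hab
        have e3 : ν b = ⊤ := dif_neg hb
        rw [e1, e3, add_top]
    · have hab : a + b ∉ N := by
        intro hmem
        exact ha (hdown (tarskiLeAddRight hzero hadd a b) hmem)
      have e1 : ν (a + b) = ⊤ := dif_neg hab
      have e2 : ν a = ⊤ := dif_neg ha
      rw [e1, e2, top_add]
  have hνmono : ∀ a b : S, a ≤ b → ν a ≤ ν b := by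
    intro a b hab
    by_cases hb : b ∈ N
    · have ha : a ∈ N := hdown hab hb
      have e1 : ν a = ENNReal.ofReal (μ ⟨a, ha⟩) := dif_pos ha
      have e2 : ν b = ENNReal.ofReal (μ ⟨b, hb⟩) := dif_pos hb
      rw [e1, e2]
      exact ENNReal.ofReal_le_ofReal (hμmono _ _ (Subtype.mk_le_mk.mpr hab))
    · have e2 : ν b = ⊤ := dif_neg hb
      rw [e2]
      exact le_top
  have hνy : ν y = 1 := by
    have hyN : y ∈ N := yN.2
    have e1 : ν y = ENNReal.ofReal (μ ⟨y, hyN⟩) := dif_pos hyN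
    have he : (⟨y, hyN⟩ : ↥N) = yN := rfl
    rw [e1, he, hμy1]
    simp
  have hνx : ν x = sInf Γ := by
    have hxN : x ∈ N := xN.2
    have e1 : ν x = ENNReal.ofReal (μ ⟨x, hxN⟩) := dif_pos hxN
    have he : (⟨x, hxN⟩ : ↥N) = xN := rfl
    rw [e1, he]
    refine le_antisymm ?_ ?_
    · refine le_sInf ?_
      rintro r ⟨p, qn, k, hk, hle, rfl⟩
      have hkpos : (0:ℝ) < (k:ℝ) := by exact_mod_cast hk
      have hleN : qn • yN + k • xN ≤ p • yN := by
        rw [← Subtype.coe_le_coe]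
        push_cast
        exact hle
      have h2 : μ (qn • yN + k • xN) ≤ μ (p • yN) := hμmono _ _ hleN
      rw [hμadd, hμsmul, hμsmul, hμsmul, hμy1] at h2
      have hμxpos : 0 ≤ μ xN := hμpos xN
      have hqp : (qn:ℝ) ≤ (p:ℝ) := by nlinarith
      have hfin : μ xN ≤ ((p:ℝ) - (qn:ℝ)) / (k:ℝ) := by
        rw [le_div_iff₀ hkpos]
        nlinarith
      calc ENNReal.ofReal (μ xN) ≤ ENNReal.ofReal (((p:ℝ) - (qn:ℝ)) / (k:ℝ)) :=
        ENNReal.ofReal_le_ofReal hfin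
      _ = ((p : ℝ≥0∞) - (qn : ℝ≥0∞)) / (k : ℝ≥0∞) := by
        rw [ENNReal.ofReal_div_of_pos hkpos,
          ENNReal.ofReal_sub _ (by positivity), ENNReal.ofReal_natCast,
          ENNReal.ofReal_natCast, ENNReal.ofReal_natCast]
    · have h1 : ENNReal.ofReal gx ≤ ENNReal.ofReal (μ xN) :=
        ENNReal.ofReal_le_ofReal (le_trans hqxgx (hqleμ xN))
      rwa [hgxdef, ENNReal.ofReal_toReal hΓtop] at h1
  exact ⟨ν, ⟨hν0, hνadd, hνmono⟩, hνy, hνx⟩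


/-- Tarski's Theorem: a nonzero element `y` of a preordered abelian monoid is not
paradoxical if and only if there is a state `ν` with `ν y = 1`.  Moreover, if `y` is not
paradoxical, then for any `x ∈ ⟨y⟩` the state can be chosen such that additionally
`ν x = inf {(p - q)/k : q • y + k • x ≤ p • y, k ≥ 1}`. -/
theorem stmt8 {S : Type*} [AddCommMonoid S] [Preorder S]
    (hzero : ∀ x : S, 0 ≤ x)
    (hadd : ∀ x y z : S, x ≤ y → x + z ≤ y + z)
    (y : S) (hy : y ≠ 0) :
    ((¬ ∃ n : ℕ, 1 ≤ n ∧ (n + 1) • y ≤ n • y) ↔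
      ∃ ν : S → ℝ≥0∞, IsState ν ∧ ν y = 1) ∧
    ((¬ ∃ n : ℕ, 1 ≤ n ∧ (n + 1) • y ≤ n • y) →
      ∀ x : S, (∃ n : ℕ, x ≤ n • y) →
        ∃ ν : S → ℝ≥0∞, IsState ν ∧ ν y = 1 ∧
          ν x = sInf {r : ℝ≥0∞ | ∃ p q k : ℕ, 1 ≤ k ∧
            q • y + k • x ≤ p • y ∧
            r = ((p : ℝ≥0∞) - (q : ℝ≥0∞)) / (k : ℝ≥0∞)}) := by
  constructor
  · constructor
    · intro hnp
      obtain ⟨ν, hst, hν1, -⟩ :=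
        tarski_aux hzero hadd y hnp 0 ⟨0, by simp⟩
      exact ⟨ν, hst, hν1⟩
    · rintro ⟨ν, ⟨hν0, hνadd, hνmono⟩, hν1⟩ ⟨n, hn1, hpar⟩
      have hsm : ∀ k : ℕ, ν (k • y) = (k : ℝ≥0∞) := by
        intro k
        induction k with
        | zero => simpa using hν0
        | succ j ih =>
          rw [succ_nsmul, hνadd, ih, hν1]
          push_cast
          ring
      have h2 := hνmono _ _ hpar
      rw [hsm, hsm] at h2
      have h3 : ((n:ℝ≥0∞) + 1 : ℝ≥0∞) ≤ (n : ℝ≥0∞) := by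
        push_cast at h2
        exact h2
      have h4 : (n : ℝ≥0∞) < (n : ℝ≥0∞) + 1 :=
        ENNReal.lt_add_right (ENNReal.natCast_ne_top n) one_ne_zero
      exact absurd (lt_of_lt_of_le h4 h3) (lt_irrefl _)
  · intro hnp x hx
    exact tarski_aux hzero hadd y hnp x hx
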